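/- Fix constants G, δ, D, β > 0, h⋆ > 0, a decreasing function σ ∈ C²(ℝ), and q with 0 < q < 16·G·D / (3·σ'(0)²) (assuming σ'(0) ≠ 0). For η⋆ > 0 set m⋆ := h⋆·η⋆/(β + h⋆) and Γ⋆ := β·η⋆/(β + h⋆), and let b_q(h⋆, m⋆, Γ⋆) be the real symmetric 3×3 matrix with rows ( (qG/3)h⋆³, (βG/6)h⋆²m⋆ − (δβ/2)(m⋆/h⋆), (G/4)h⋆³Γ⋆ − (q/4)h⋆²σ'(Γ⋆) ), ( (βG/6)h⋆²m⋆ − (δβ/2)(m⋆/h⋆), δβ, −(β/4)m⋆h⋆σ'(Γ⋆) ), ( (G/4)h⋆³Γ⋆ − (q/4)h⋆²σ'(Γ⋆), −(β/4)m⋆h⋆σ'(Γ⋆), D·h⋆ − h⋆²Γ⋆σ'(Γ⋆) ). Then there exists ε > 0 such that for all η⋆ ∈ (0, ε) the matrix b_q(h⋆, m⋆, Γ⋆) is positive definite. -/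

import Mathlib

open Matrix in
lemma posdef3 (a b c d e f : ℝ) (ha : 0 < a)
    (h2 : 0 < a * b - d ^ 2)
    (h3 : 0 < a*b*c - a*f^2 - b*e^2 - c*d^2 + 2*d*e*f) :
    (!![a, d, e; d, b, f; e, f, c] : Matrix (Fin 3) (Fin 3) ℝ).PosDef := by
  rw [Matrix.posDef_iff_dotProduct_mulVec]
  constructor
  · ext i j
    fin_cases i <;> fin_cases j <;>
      simp [Matrix.conjTranspose, Matrix.vecHead, Matrix.vecTail]
  · intro x hx
    have hQ : dotProduct (star x)
          ((!![a, d, e; d, b, f; e, f, c] : Matrix (Fin 3) (Fin 3) ℝ).mulVec x)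
        = a*(x 0)^2 + b*(x 1)^2 + c*(x 2)^2 + 2*d*(x 0)*(x 1) + 2*e*(x 0)*(x 2)
          + 2*f*(x 1)*(x 2) := by
      simp [dotProduct, Matrix.mulVec, Fin.sum_univ_three, Matrix.vecHead, Matrix.vecTail]
      ring
    rw [hQ]
    have key : a * (a*b - d^2) *
          (a*(x 0)^2 + b*(x 1)^2 + c*(x 2)^2 + 2*d*(x 0)*(x 1) + 2*e*(x 0)*(x 2) + 2*f*(x 1)*(x 2))
        = (a*b - d^2) * (a*(x 0) + d*(x 1) + e*(x 2))^2
          + ((a*b - d^2)*(x 1) + (a*f - d*e)*(x 2))^2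
          + a*(a*b*c - a*f^2 - b*e^2 - c*d^2 + 2*d*e*f)*(x 2)^2 := by ring
    have hRHS : 0 < (a*b - d^2) * (a*(x 0) + d*(x 1) + e*(x 2))^2
          + ((a*b - d^2)*(x 1) + (a*f - d*e)*(x 2))^2
          + a*(a*b*c - a*f^2 - b*e^2 - c*d^2 + 2*d*e*f)*(x 2)^2 := by
      by_cases h2z : x 2 = 0
      · by_cases h1z : x 1 = 0
        · have h0z : x 0 ≠ 0 := by
            intro h0
            exact hx (funext fun i => by fin_cases i <;> simpa)
          rw [h2z, h1z]
          have hne : a*(x 0) + d*0 + e*0 ≠ 0 := by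
            simpa using mul_ne_zero ha.ne' h0z
          have : (0:ℝ) < (a*b - d^2) * (a*(x 0) + d*0 + e*0)^2 :=
            mul_pos h2 (pow_two_pos_of_ne_zero hne)
          nlinarith [sq_nonneg ((a*b - d^2)*0 + (a*f - d*e)*0)]
        · rw [h2z]
          have h1 : ((a*b - d^2)*(x 1) + (a*f - d*e)*0)^2 > 0 := by
            have : (a*b - d^2)*(x 1) ≠ 0 := mul_ne_zero (ne_of_gt h2) h1z
            simpa using pow_pos (abs_pos.mpr this) 2 |>.trans_le (le_of_eq (sq_abs _))
          nlinarith [sq_nonneg (a*(x 0) + d*(x 1) + e*0), h2]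
      · have : 0 < a*(a*b*c - a*f^2 - b*e^2 - c*d^2 + 2*d*e*f)*(x 2)^2 := by positivity
        nlinarith [sq_nonneg (a*(x 0) + d*(x 1) + e*(x 2)),
          sq_nonneg ((a*b - d^2)*(x 1) + (a*f - d*e)*(x 2)), h2]
    nlinarith [mul_pos ha h2]

/-- For small equilibrium surfactant level `η⋆`, the matrix
`b_q(h⋆, m⋆, Γ⋆)` governing the weighted L² energy identity for the
linearized thin-film system is positive definite. -/
theorem stmt_12 (G δ D β hstar q : ℝ) (σ : ℝ → ℝ)
    (hG : 0 < G) (hδ : 0 < δ) (hD : 0 < D) (hβ : 0 < β) (hh : 0 < hstar)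
    (hσ : ContDiff ℝ 2 σ) (hσdec : StrictAnti σ) (hσ0 : deriv σ 0 ≠ 0)
    (hq0 : 0 < q) (hq : q < 16 * G * D / (3 * (deriv σ 0) ^ 2)) :
    ∃ ε > 0, ∀ ηstar ∈ Set.Ioo (0:ℝ) ε,
      (fun (mstar Γstar : ℝ) =>
        (!![q * G / 3 * hstar ^ 3,
            β * G / 6 * hstar ^ 2 * mstar - δ * β / 2 * (mstar / hstar),
            G / 4 * hstar ^ 3 * Γstar - q / 4 * hstar ^ 2 * deriv σ Γstar;
            β * G / 6 * hstar ^ 2 * mstar - δ * β / 2 * (mstar / hstar),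
            δ * β,
            -(β / 4) * mstar * hstar * deriv σ Γstar;
            G / 4 * hstar ^ 3 * Γstar - q / 4 * hstar ^ 2 * deriv σ Γstar,
            -(β / 4) * mstar * hstar * deriv σ Γstar,
            D * hstar - hstar ^ 2 * Γstar * deriv σ Γstar] :
          Matrix (Fin 3) (Fin 3) ℝ).PosDef)
        (hstar * ηstar / (β + hstar)) (β * ηstar / (β + hstar)) := by
  have hσ' : Continuous (deriv σ) := hσ.continuous_deriv one_le_two
  set a : ℝ := q * G / 3 * hstar ^ 3 with ha_def
  have ha : 0 < a := by positivity
  set b : ℝ := δ * β with hb_def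
  have hb : 0 < b := by positivity
  -- functions of ηstar
  set md : ℝ → ℝ := fun η => hstar * η / (β + hstar) with hmd
  set Γd : ℝ → ℝ := fun η => β * η / (β + hstar) with hΓd
  set dd : ℝ → ℝ := fun η =>
    β * G / 6 * hstar ^ 2 * md η - δ * β / 2 * (md η / hstar) with hdd
  set ed : ℝ → ℝ := fun η =>
    G / 4 * hstar ^ 3 * Γd η - q / 4 * hstar ^ 2 * deriv σ (Γd η) with hed
  set fd : ℝ → ℝ := fun η => -(β / 4) * md η * hstar * deriv σ (Γd η) with hfd
  set cd : ℝ → ℝ := fun η => D * hstar - hstar ^ 2 * Γd η * deriv σ (Γd η) with hcd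
  have hmdc : Continuous md := by fun_prop
  have hΓdc : Continuous Γd := by fun_prop
  have hσΓc : Continuous (fun η => deriv σ (Γd η)) := hσ'.comp hΓdc
  have hddc : Continuous dd := by fun_prop
  have hedc : Continuous ed := by
    rw [hed]; exact ((continuous_const.mul hΓdc)).sub (continuous_const.mul hσΓc)
  have hfdc : Continuous fd := by
    rw [hfd]; exact ((continuous_const.mul hmdc).mul continuous_const).mul hσΓc
  have hcdc : Continuous cd := by
    rw [hcd]; exact continuous_const.sub ((continuous_const.mul hΓdc).mul hσΓc)
  set F2 : ℝ → ℝ := fun η => a * b - (dd η) ^ 2 with hF2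
  set F3 : ℝ → ℝ := fun η =>
    a * b * cd η - a * (fd η) ^ 2 - b * (ed η) ^ 2 - cd η * (dd η) ^ 2
      + 2 * dd η * ed η * fd η with hF3
  have hF2c : Continuous F2 := by
    rw [hF2]; exact continuous_const.sub (hddc.pow 2)
  have hF3c : Continuous F3 := by
    rw [hF3]
    exact (((( continuous_const.mul hcdc).sub (continuous_const.mul (hfdc.pow 2))).sub
      (continuous_const.mul (hedc.pow 2))).sub (hcdc.mul (hddc.pow 2))).add
      (((continuous_const.mul hddc).mul hedc).mul hfdc)
  -- values at 0
  have hm0 : md 0 = 0 := by simp [hmd]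
  have hΓ0 : Γd 0 = 0 := by simp [hΓd]
  have hd0 : dd 0 = 0 := by simp [hdd, hm0]
  have hf0 : fd 0 = 0 := by simp [hfd, hm0]
  have he0 : ed 0 = - (q / 4 * hstar ^ 2 * deriv σ 0) := by simp [hed, hΓ0]
  have hc0 : cd 0 = D * hstar := by simp [hcd, hΓ0]
  have hF20 : 0 < F2 0 := by
    rw [hF2]; simp only [hd0]; nlinarith [mul_pos ha hb]
  have hs2 : 0 < (deriv σ 0) ^ 2 := pow_two_pos_of_ne_zero hσ0
  have hq' : q * (3 * (deriv σ 0) ^ 2) < 16 * G * D := by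
    rwa [lt_div_iff₀ (by positivity)] at hq
  have hF30 : 0 < F3 0 := by
    rw [hF3]
    simp only [hd0, hf0, he0, hc0]
    have hdiff : 0 < 16 * G * D - q * (3 * (deriv σ 0) ^ 2) := by linarith
    have hA : 0 < δ * β * hstar ^ 4 * q := by positivity
    rw [ha_def, hb_def]
    nlinarith [mul_pos hA hdiff]
  have hev : ∀ᶠ η in nhds (0:ℝ), 0 < F2 η ∧ 0 < F3 η := by
    filter_upwards [(hF2c.continuousAt (x := 0)).eventually (eventually_gt_nhds hF20),
      (hF3c.continuousAt (x := 0)).eventually (eventually_gt_nhds hF30)] with η h1 h2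
    exact ⟨h1, h2⟩
  rw [Metric.eventually_nhds_iff] at hev
  obtain ⟨ε, hε, hball⟩ := hev
  refine ⟨ε, hε, fun η hη => ?_⟩
  have hdist : dist η 0 < ε := by
    rw [Real.dist_eq, sub_zero, abs_of_pos hη.1]; exact hη.2
  obtain ⟨h2, h3⟩ := hball hdist
  exact posdef3 a b (cd η) (dd η) (ed η) (fd η) ha h2 h3
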